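/- For |q| < 1, real x with |x| ≤ 1, and positive integers a, p with a < p: log((−x q^a; q^p)_∞ / (x q^a; q^p)_∞) = 2 ∑_{n=1}^∞ q^n ∑_{AB = n, A odd, B ≡ a (mod p)} x^A / A. -/

import Mathlib

lemma aux_abs_log_one_add_le {t : ℝ} (h : |t| < 1) :
    |Real.log (1 + t)| ≤ |t| / (1 - |t|) := by
  obtain ⟨h1, h2⟩ := abs_lt.mp h
  have h0 : 0 < 1 + t := by linarith
  have hd : 0 < 1 - |t| := by linarith [abs_lt.mpr ⟨h1, h2⟩]
  rw [abs_le]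
  constructor
  · have hle := Real.log_le_sub_one_of_pos (inv_pos.mpr h0)
    rw [Real.log_inv] at hle
    have h3 : (1 + t)⁻¹ - 1 = -t / (1 + t) := by field_simp; ring
    have h4 : -t / (1 + t) ≤ |t| / (1 - |t|) := by
      apply div_le_div₀ (abs_nonneg t) (neg_le_abs t) hd
      have := neg_abs_le t; linarith
    linarith
  · have hle := Real.log_le_sub_one_of_pos h0
    have h5 : |t| ≤ |t| / (1 - |t|) := by
      rw [le_div_iff₀ hd]
      nlinarith [abs_nonneg t]
    have := le_abs_self t
    linarith

set_option maxHeartbeats 1000000 in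
theorem stmt9 (q x : ℝ) (hq : 0 < q) (hq1 : q < 1) (hx : |x| ≤ 1)
    (a p : ℕ) (ha : 1 ≤ a) (hap : a < p) :
    Real.log ((∏' n : ℕ, (1 + x * q ^ (a + p * n))) / ∏' n : ℕ, (1 - x * q ^ (a + p * n)))
      = 2 * ∑' n : ℕ, q ^ (n + 1) *
          ∑ A ∈ (n + 1).divisors.filter (fun A => Odd A ∧ ((n + 1) / A) % p = a % p),
            x ^ A / (A : ℝ) := by
  have hp : 1 ≤ p := by omega
  set y : ℕ → ℝ := fun n => x * q ^ (a + p * n) with hy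
  set D : ℕ → Finset ℕ :=
    fun m => (m + 1).divisors.filter (fun A => Odd A ∧ ((m + 1) / A) % p = a % p) with hD
  have hyabs : ∀ n, |y n| ≤ q ^ (a + p * n) := by
    intro n
    rw [hy, abs_mul, abs_of_pos (pow_pos hq _)]
    exact mul_le_of_le_one_left (pow_nonneg hq.le _) hx |>.trans_eq rfl
  have hqa : q ^ a < 1 := pow_lt_one₀ hq.le hq1 (by omega)
  have hqle : ∀ n, q ^ (a + p * n) ≤ q ^ a :=
    fun n => pow_le_pow_of_le_one hq.le hq1.le (Nat.le_add_right _ _)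
  have hylt : ∀ n, |y n| < 1 := fun n => lt_of_le_of_lt ((hyabs n).trans (hqle n)) hqa
  have hposP : ∀ n, 0 < 1 + y n := by
    intro n; have := abs_lt.mp (hylt n); linarith
  have hposQ : ∀ n, 0 < 1 - y n := by
    intro n; have := abs_lt.mp (hylt n); linarith
  -- summability of logs
  have hgeo : Summable (fun n : ℕ => q ^ a / (1 - q ^ a) * (q ^ p) ^ n) :=
    (summable_geometric_of_lt_one (pow_nonneg hq.le _)
      (pow_lt_one₀ hq.le hq1 (by omega))).mul_left _
  have hlog : ∀ g : ℕ → ℝ, (∀ n, |g n| ≤ q ^ (a + p * n)) →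
      Summable (fun n => Real.log (1 + g n)) := by
    intro g hg
    apply Summable.of_norm_bounded hgeo
    intro n
    have hga : |g n| ≤ q ^ a := (hg n).trans (hqle n)
    have h1 : |g n| < 1 := lt_of_le_of_lt hga hqa
    calc ‖Real.log (1 + g n)‖ = |Real.log (1 + g n)| := rfl
      _ ≤ |g n| / (1 - |g n|) := aux_abs_log_one_add_le h1
      _ ≤ q ^ (a + p * n) / (1 - q ^ a) := by
          apply div_le_div₀ (pow_nonneg hq.le _) (hg n) (by linarith) (by linarith)
      _ = q ^ a / (1 - q ^ a) * (q ^ p) ^ n := by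
          rw [pow_add, pow_mul]; ring
  have hlog1 : Summable (fun n => Real.log (1 + y n)) := hlog y hyabs
  have hlog2 : Summable (fun n => Real.log (1 - y n)) := by
    have := hlog (fun n => -(y n)) (fun n => by simpa using hyabs n)
    simpa [sub_eq_add_neg] using this
  -- infinite products as exponentials
  have hprod : ∀ g : ℕ → ℝ, (∀ n, 0 < 1 + g n) →
      Summable (fun n => Real.log (1 + g n)) →
      ∏' n, (1 + g n) = Real.exp (∑' n, Real.log (1 + g n)) := by
    intro g h0 hs
    have h2 := hs.hasSum.rexp
    have h3 : (Real.exp ∘ fun n => Real.log (1 + g n)) = fun n => 1 + g n :=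
      funext fun n => Real.exp_log (h0 n)
    rw [h3] at h2
    exact h2.tprod_eq
  have hPv : ∏' n, (1 + y n) = Real.exp (∑' n, Real.log (1 + y n)) :=
    hprod y hposP hlog1
  have hQv : ∏' n, (1 - y n) = Real.exp (∑' n, Real.log (1 - y n)) := by
    have := hprod (fun n => -(y n)) (fun n => by have := hposQ n; simpa [sub_eq_add_neg] using this)
      (by have := hlog2; simpa [sub_eq_add_neg] using this)
    simpa [sub_eq_add_neg] using this
  -- the summand over pairs
  set F : ℕ × ℕ → ℝ :=
    fun nk => 2 * (1 / (2 * (nk.2 : ℝ) + 1)) * (y nk.1) ^ (2 * nk.2 + 1) with hFdef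
  have hFinner : ∀ n, HasSum (fun k => F (n, k))
      (Real.log (1 + y n) - Real.log (1 - y n)) :=
    fun n => Real.hasSum_log_sub_log_of_abs_lt_one (hylt n)
  have hFsum : Summable F := by
    rw [← summable_abs_iff]
    have hbnd : Summable (fun nk : ℕ × ℕ => (2 * q) * (q ^ nk.1 * q ^ nk.2)) :=
      Summable.mul_left _ ((summable_geometric_of_lt_one hq.le hq1).mul_of_nonneg
        (summable_geometric_of_lt_one hq.le hq1)
        (fun n => pow_nonneg hq.le n) (fun n => pow_nonneg hq.le n))
    apply Summable.of_nonneg_of_le (fun _ => abs_nonneg _) ?_ hbnd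
    rintro ⟨n, k⟩
    have hk1 : (0:ℝ) < 2 * (k : ℝ) + 1 := by positivity
    have habs : |F (n, k)| = 2 * (1 / (2 * (k : ℝ) + 1)) * |y n| ^ (2 * k + 1) := by
      rw [hFdef]
      rw [abs_mul, abs_pow, abs_mul, abs_of_pos (by norm_num : (0:ℝ) < 2),
        abs_of_pos (by positivity : (0:ℝ) < 1 / (2 * (k:ℝ) + 1))]
    have hle1 : |y n| ^ (2 * k + 1) ≤ (q ^ (a + p * n)) ^ (2 * k + 1) :=
      pow_le_pow_left₀ (abs_nonneg _) (hyabs n) _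
    have hle2 : (q ^ (a + p * n)) ^ (2 * k + 1) ≤ q ^ (n + k + 1) := by
      rw [← pow_mul]
      apply pow_le_pow_of_le_one hq.le hq1.le
      have h1 : 1 + n ≤ a + p * n := by nlinarith
      calc n + k + 1 ≤ (1 + n) * (2 * k + 1) := by nlinarith
        _ ≤ (a + p * n) * (2 * k + 1) := Nat.mul_le_mul_right _ h1
    have hfrac : 1 / (2 * (k : ℝ) + 1) ≤ 1 := by
      rw [div_le_one hk1]; linarith [Nat.cast_nonneg (α := ℝ) k]
    calc |F (n, k)| = 2 * (1 / (2 * (k : ℝ) + 1)) * |y n| ^ (2 * k + 1) := habs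
      _ ≤ 2 * 1 * (q ^ (n + k + 1)) := by
          apply mul_le_mul (by nlinarith) (hle1.trans hle2) (by positivity) (by norm_num)
      _ = (2 * q) * (q ^ n * q ^ k) := by rw [pow_add, pow_add]; ring
  -- LHS computation
  have hLHS : Real.log ((∏' n, (1 + y n)) / ∏' n, (1 - y n)) = ∑' nk : ℕ × ℕ, F nk := by
    rw [hPv, hQv, ← Real.exp_sub, Real.log_exp, ← Summable.tsum_sub hlog1 hlog2]
    calc ∑' n, (Real.log (1 + y n) - Real.log (1 - y n))
        = ∑' n, ∑' k, F (n, k) := tsum_congr fun n => ((hFinner n).tsum_eq).symm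
      _ = ∑' nk : ℕ × ℕ, F nk := (Summable.tsum_prod' hFsum (fun n => (hFinner n).summable)).symm
  -- the summand H over (m, k)
  set H : ℕ × ℕ → ℝ := fun mk => 2 * (q ^ (mk.1 + 1) *
    (if 2 * mk.2 + 1 ∈ D mk.1 then x ^ (2 * mk.2 + 1) / ((2 * mk.2 + 1 : ℕ) : ℝ) else 0))
    with hHdef
  -- finset sum as tsum over odd numbers
  have hSm : ∀ m : ℕ, ∑ A ∈ D m, x ^ A / (A : ℝ)
      = ∑' k : ℕ, (if 2 * k + 1 ∈ D m then x ^ (2 * k + 1) / ((2 * k + 1 : ℕ) : ℝ) else 0) := by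
    intro m
    have h1 := sum_eq_tsum_indicator (fun A : ℕ => x ^ A / (A : ℝ)) (D m)
    rw [h1]
    have hinj : Function.Injective (fun k : ℕ => 2 * k + 1) := by
      intro u v huv
      dsimp only at huv
      omega
    have hsupp : Function.support (Set.indicator (↑(D m)) (fun A : ℕ => x ^ A / (A : ℝ)))
        ⊆ Set.range (fun k : ℕ => 2 * k + 1) := by
      intro A hA
      have hmem : A ∈ D m := by
        by_contra hc
        apply hA
        rw [Set.indicator_of_notMem (by simpa using hc)]
      have hodd : Odd A := (Finset.mem_filter.mp hmem).2.1
      obtain ⟨c, hc⟩ := hodd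
      exact ⟨c, by dsimp only; omega⟩
    rw [← hinj.tsum_eq hsupp]
    apply tsum_congr
    intro k
    by_cases hmem : 2 * k + 1 ∈ D m
    · rw [if_pos hmem, Set.indicator_of_mem (by simpa using hmem)]
    · rw [if_neg hmem, Set.indicator_of_notMem (by simpa using hmem)]
  -- the injection Φ
  set Φ : ℕ × ℕ → ℕ × ℕ := fun kn => ((2 * kn.1 + 1) * (a + p * kn.2) - 1, kn.1) with hΦdef
  have hΦinj : Function.Injective Φ := by
    rintro ⟨k, n⟩ ⟨k', n'⟩ h
    rw [hΦdef, Prod.ext_iff] at h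
    obtain ⟨h1, h2⟩ := h
    simp only at h1 h2
    subst h2
    have e1 : 1 ≤ (2 * k + 1) * (a + p * n) := Nat.one_le_iff_ne_zero.mpr (by positivity)
    have e2 : 1 ≤ (2 * k + 1) * (a + p * n') := Nat.one_le_iff_ne_zero.mpr (by positivity)
    have h3 : (2 * k + 1) * (a + p * n) = (2 * k + 1) * (a + p * n') := by omega
    have h4 : a + p * n = a + p * n' := Nat.eq_of_mul_eq_mul_left (by omega) h3
    have h5 : n = n' := by
      have := Nat.eq_of_mul_eq_mul_left (show 0 < p by omega) (by omega : p * n = p * n')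
      exact this
    simp [h5]
  have hΦmem : ∀ k n : ℕ, 2 * k + 1 ∈ D ((2 * k + 1) * (a + p * n) - 1) := by
    intro k n
    have hB : 1 ≤ a + p * n := by omega
    have hm1 : (2 * k + 1) * (a + p * n) - 1 + 1 = (2 * k + 1) * (a + p * n) := by
      have : 1 ≤ (2 * k + 1) * (a + p * n) := Nat.one_le_iff_ne_zero.mpr (by positivity)
      omega
    rw [hD]
    simp only [Finset.mem_filter, Nat.mem_divisors, hm1]
    refine ⟨⟨⟨a + p * n, rfl⟩, by positivity⟩, ⟨k, by ring⟩, ?_⟩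
    rw [Nat.mul_div_cancel_left _ (by omega : 0 < 2 * k + 1)]
    exact Nat.add_mul_mod_self_left a p n
  have hΦval : ∀ kn : ℕ × ℕ, H (Φ kn) = F (kn.2, kn.1) := by
    rintro ⟨k, n⟩
    have hm1 : (2 * k + 1) * (a + p * n) - 1 + 1 = (2 * k + 1) * (a + p * n) := by
      have : 1 ≤ (2 * k + 1) * (a + p * n) := Nat.one_le_iff_ne_zero.mpr (by positivity)
      omega
    rw [hHdef, hΦdef]
    simp only [if_pos (hΦmem k n)]
    rw [hFdef]
    simp only [hm1]
    have hpow : (y n) ^ (2 * k + 1) = x ^ (2 * k + 1) * q ^ ((2 * k + 1) * (a + p * n)) := by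
      rw [hy, mul_pow, ← pow_mul, Nat.mul_comm (a + p * n)]
    rw [hpow]
    have hc : ((2 * k + 1 : ℕ) : ℝ) = 2 * (k : ℝ) + 1 := by push_cast; ring
    rw [hc]
    ring
  have hΦsupp : Function.support H ⊆ Set.range Φ := by
    rintro ⟨m, k⟩ hmk
    have hmem : 2 * k + 1 ∈ D m := by
      by_contra hc
      apply hmk
      rw [hHdef]
      simp only [if_neg hc, mul_zero]
    rw [hD] at hmem
    simp only [Finset.mem_filter, Nat.mem_divisors] at hmem
    obtain ⟨⟨hdvd, _⟩, _, hmod⟩ := hmem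
    set B := (m + 1) / (2 * k + 1) with hB
    have hBval : (2 * k + 1) * B = m + 1 := Nat.mul_div_cancel' hdvd
    have hamod : a % p = a := Nat.mod_eq_of_lt hap
    have hBmod : B % p = a := by rw [hmod, hamod]
    have hab : a + p * (B / p) = B := by
      have := Nat.div_add_mod B p
      omega
    refine ⟨(k, B / p), ?_⟩
    rw [hΦdef]
    dsimp only
    rw [hab, hBval]
    rfl
  have hHF : ∑' mk : ℕ × ℕ, H mk = ∑' nk : ℕ × ℕ, F nk := by
    rw [← hΦinj.tsum_eq hΦsupp]
    calc ∑' kn : ℕ × ℕ, H (Φ kn) = ∑' kn : ℕ × ℕ, F ((Equiv.prodComm ℕ ℕ) kn) :=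
          tsum_congr fun kn => hΦval kn
      _ = ∑' nk : ℕ × ℕ, F nk := (Equiv.prodComm ℕ ℕ).tsum_eq F
  have hHsum : Summable H := by
    apply (hΦinj.summable_iff ?_).mp
    · have : (H ∘ Φ) = fun kn : ℕ × ℕ => F ((Equiv.prodComm ℕ ℕ) kn) :=
        funext fun kn => hΦval kn
      rw [this]
      exact (Equiv.prodComm ℕ ℕ).summable_iff.mpr hFsum
    · intro mk hmk
      by_contra hc
      exact hmk (hΦsupp hc)
  -- RHS computation
  have hRHS : 2 * (∑' m : ℕ, q ^ (m + 1) * ∑ A ∈ D m, x ^ A / (A : ℝ))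
      = ∑' mk : ℕ × ℕ, H mk := by
    rw [Summable.tsum_prod' hHsum (fun m => hHsum.prod_factor m)]
    rw [← tsum_mul_left]
    apply tsum_congr
    intro m
    rw [hSm m, ← tsum_mul_left, ← tsum_mul_left]
  -- put it together
  show Real.log ((∏' n, (1 + y n)) / ∏' n, (1 - y n))
      = 2 * ∑' m : ℕ, q ^ (m + 1) * ∑ A ∈ D m, x ^ A / (A : ℝ)
  rw [hLHS, hRHS, hHF]
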